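/- Let T = (T*, T△) be a spherical latin bitrade and a = (a1,a2,a3) ∈ T*. Suppose b = (b1,b2,b3) ∈ T* and i ∈ {1,2,3} are such that b_i ≠ a_i and b̄_i = ā_i. Then Δ(c,a) degenerates for every c = (c1,c2,c3) ∈ T△ with c_i = b_i, and the point b̄ = (b̄2, b̄1) is not a vertex of Σ. -/

import Mathlib

open Function Set

set_option linter.unusedSectionVars false

variable {R C S : Type*} [DecidableEq R] [DecidableEq C] [DecidableEq S]

/-- Conditions (R1)-(R3) of a latin bitrade: `star` and `tri` are disjoint, and for every
triple in one set and every pair of coordinates there is exactly one triple of the other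
set agreeing in those two coordinates. -/
structure IsLatinBitrade (star tri : Finset (R × C × S)) : Prop where
  disj : Disjoint star tri
  r2a : ∀ p ∈ star, ∃! q, q ∈ tri ∧ q.1 = p.1 ∧ q.2.1 = p.2.1
  r2b : ∀ p ∈ star, ∃! q, q ∈ tri ∧ q.1 = p.1 ∧ q.2.2 = p.2.2
  r2c : ∀ p ∈ star, ∃! q, q ∈ tri ∧ q.2.1 = p.2.1 ∧ q.2.2 = p.2.2
  r3a : ∀ q ∈ tri, ∃! p, p ∈ star ∧ p.1 = q.1 ∧ p.2.1 = q.2.1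
  r3b : ∀ q ∈ tri, ∃! p, p ∈ star ∧ p.1 = q.1 ∧ p.2.2 = q.2.2
  r3c : ∀ q ∈ tri, ∃! p, p ∈ star ∧ p.2.1 = q.2.1 ∧ p.2.2 = q.2.2

/-- A latin bitrade is indecomposable if it is not the disjoint union of two
nonempty latin bitrades. -/
def BitradeIndecomposable (star tri : Finset (R × C × S)) : Prop :=
  ¬ ∃ s₁ t₁ s₂ t₂ : Finset (R × C × S),
      s₁.Nonempty ∧ s₂.Nonempty ∧ Disjoint s₁ s₂ ∧ Disjoint t₁ t₂ ∧
      s₁ ∪ s₂ = star ∧ t₁ ∪ t₂ = tri ∧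
      IsLatinBitrade s₁ t₁ ∧ IsLatinBitrade s₂ t₂

/-- An indecomposable latin bitrade is spherical if `m = s + 2`, where `m` is the total
number of occurring rows, columns and symbols and `s` is the size. -/
def IsSphericalBitrade (star tri : Finset (R × C × S)) : Prop :=
  IsLatinBitrade star tri ∧ BitradeIndecomposable star tri ∧
    (star.image Prod.fst).card + (star.image fun p => p.2.1).card +
      (star.image fun p => p.2.2).card = star.card + 2

/-- `(f1, f2, f3)` is a (rational) solution of the linear system `Eq(T,a)`:
`a₁ = 0`, `a₂ = 0`, `a₃ = 1`, and `b₁ + b₂ = b₃` for every `b ∈ T* \ {a}`. -/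
def IsEqSolution (star : Finset (R × C × S)) (a : R × C × S)
    (f1 : R → ℚ) (f2 : C → ℚ) (f3 : S → ℚ) : Prop :=
  f1 a.1 = 0 ∧ f2 a.2.1 = 0 ∧ f3 a.2.2 = 1 ∧
    ∀ b ∈ star, b ≠ a → f1 b.1 + f2 b.2.1 = f3 b.2.2

/-- The solution is separated: two rows (columns, symbols) receiving the same value coincide. -/
def SeparatedSolution (star : Finset (R × C × S))
    (f1 : R → ℚ) (f2 : C → ℚ) (f3 : S → ℚ) : Prop :=
  ∀ b ∈ star, ∀ d ∈ star,
    (f1 b.1 = f1 d.1 → b.1 = d.1) ∧ (f2 b.2.1 = f2 d.2.1 → b.2.1 = d.2.1) ∧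
      (f3 b.2.2 = f3 d.2.2 → b.2.2 = d.2.2)

/-- The triangle `Σ = {(x,y) : 0 ≤ x, 0 ≤ y, x + y ≤ 1}`. -/
def SigmaT : Set (ℝ × ℝ) := {p | 0 ≤ p.1 ∧ 0 ≤ p.2 ∧ p.1 + p.2 ≤ 1}

/-- The (closed) triangle bounded by the lines `y = r1`, `x = r2` and `x + y = r3`.
If `r1 + r2 = r3` this set degenerates to the single point `(r2, r1)`. -/
def DeltaT (r1 r2 r3 : ℚ) : Set (ℝ × ℝ) :=
  {p | ((r1 : ℝ) ≤ p.2 ∧ (r2 : ℝ) ≤ p.1 ∧ p.1 + p.2 ≤ (r3 : ℝ)) ∨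
       (p.2 ≤ (r1 : ℝ) ∧ p.1 ≤ (r2 : ℝ) ∧ (r3 : ℝ) ≤ p.1 + p.2)}

/-- The triangle bounded by `y = r1`, `x = r2`, `x + y = r3` degenerates:
the three lines meet in a single point. -/
def DeltaDegenerate (r1 r2 r3 : ℚ) : Prop := r1 + r2 = r3

/-- The three pairwise intersection points of the lines `y = r1`, `x = r2`, `x + y = r3`,
i.e. the vertices of the triangle they bound. -/
def DeltaVerts (r1 r2 r3 : ℚ) : Set (ℝ × ℝ) :=
  {((r2 : ℝ), (r1 : ℝ)), ((r3 : ℝ) - (r1 : ℝ), (r1 : ℝ)), ((r2 : ℝ), (r3 : ℝ) - (r2 : ℝ))}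

/-- The horizontal side (upon the line `y = r1`) of the triangle bounded by
`y = r1`, `x = r2`, `x + y = r3`. -/
def sideH (r1 r2 r3 : ℚ) : Set (ℝ × ℝ) :=
  segment ℝ ((r2 : ℝ), (r1 : ℝ)) ((r3 : ℝ) - (r1 : ℝ), (r1 : ℝ))

/-- The vertical side (upon the line `x = r2`). -/
def sideV (r1 r2 r3 : ℚ) : Set (ℝ × ℝ) :=
  segment ℝ ((r2 : ℝ), (r1 : ℝ)) ((r2 : ℝ), (r3 : ℝ) - (r2 : ℝ))

/-- The diagonal side (upon the line `x + y = r3`). -/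
def sideD (r1 r2 r3 : ℚ) : Set (ℝ × ℝ) :=
  segment ℝ ((r3 : ℝ) - (r1 : ℝ), (r1 : ℝ)) ((r2 : ℝ), (r3 : ℝ) - (r2 : ℝ))

/-- The triangle `Δ(c,a)` associated with a triple `c` and the solution `(f1,f2,f3)`. -/
def DeltaOf (f1 : R → ℚ) (f2 : C → ℚ) (f3 : S → ℚ) (c : R × C × S) : Set (ℝ × ℝ) :=
  DeltaT (f1 c.1) (f2 c.2.1) (f3 c.2.2)

/-- The value assigned by the solution `(f1,f2,f3)` to the `i`-th coordinate of a triple. -/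
def coordVal (f1 : R → ℚ) (f2 : C → ℚ) (f3 : S → ℚ) (p : R × C × S) : Fin 3 → ℚ :=
  ![f1 p.1, f2 p.2.1, f3 p.2.2]

/-- `p` and `q` agree in the `i`-th coordinate. -/
def coordEq (p q : R × C × S) : Fin 3 → Prop :=
  ![p.1 = q.1, p.2.1 = q.2.1, p.2.2 = q.2.2]

section LBHelpers

variable {star tri : Finset (R × C × S)}

private theorem lb_eu_restrict {α : Type*} {A B : Finset α} {P : α → Prop}
    (h : ∃! x, x ∈ A ∧ P x) (hBA : B ⊆ A) (hB : ∀ x ∈ A, P x → x ∈ B) :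
    ∃! x, x ∈ B ∧ P x := by
  obtain ⟨x, ⟨hxA, hxP⟩, hu⟩ := h
  exact ⟨x, ⟨hB x hxA hxP, hxP⟩, fun y ⟨hyB, hyP⟩ => hu y ⟨hBA hyB, hyP⟩⟩

private theorem lb_pair_sum {β γ : Type*} (π₁ : R × C × S → β) (π₂ : R × C × S → γ)
    (hstar : ∀ p ∈ star, ∃! q, q ∈ tri ∧ π₁ q = π₁ p ∧ π₂ q = π₂ p)
    (htri : ∀ q ∈ tri, ∃! p, p ∈ star ∧ π₁ p = π₁ q ∧ π₂ p = π₂ q)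
    (w : R × C × S → ℚ) (hw : ∀ x y, π₁ x = π₁ y → π₂ x = π₂ y → w x = w y) :
    ∑ c ∈ tri, w c = ∑ p ∈ star, w p := by
  choose! toS hS1 hS2 hS3 using fun q hq => (htri q hq).exists
  choose! toT hT1 hT2 hT3 using fun p hp => (hstar p hp).exists
  refine Finset.sum_bij' (fun q (_ : q ∈ tri) => toS q) (fun p (_ : p ∈ star) => toT p)
    (fun q hq => hS1 q hq) (fun p hp => hT1 p hp) ?_ ?_ ?_
  · intro q hq
    exact (hstar (toS q) (hS1 q hq)).unique
      ⟨hT1 _ (hS1 q hq), hT2 _ (hS1 q hq), hT3 _ (hS1 q hq)⟩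
      ⟨hq, (hS2 q hq).symm, (hS3 q hq).symm⟩
  · intro p hp
    exact (htri (toT p) (hT1 p hp)).unique
      ⟨hS1 _ (hT1 p hp), hS2 _ (hT1 p hp), hS3 _ (hT1 p hp)⟩
      ⟨hp, (hT2 p hp).symm, (hT3 p hp).symm⟩
  · intro q hq
    exact hw q (toS q) (hS2 q hq).symm (hS3 q hq).symm

private theorem lb_pair_card {β γ : Type*} (π₁ : R × C × S → β) (π₂ : R × C × S → γ)
    (hstar : ∀ p ∈ star, ∃! q, q ∈ tri ∧ π₁ q = π₁ p ∧ π₂ q = π₂ p)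
    (htri : ∀ q ∈ tri, ∃! p, p ∈ star ∧ π₁ p = π₁ q ∧ π₂ p = π₂ q)
    (P : R × C × S → Prop) [DecidablePred P]
    (hP : ∀ x y, π₁ x = π₁ y → π₂ x = π₂ y → (P x ↔ P y)) :
    (tri.filter P).card = (star.filter P).card := by
  choose! toS hS1 hS2 hS3 using fun q hq => (htri q hq).exists
  choose! toT hT1 hT2 hT3 using fun p hp => (hstar p hp).exists
  refine Finset.card_bij' (fun q (hq : q ∈ tri.filter P) => toS q)
    (fun p (hp : p ∈ star.filter P) => toT p) ?_ ?_ ?_ ?_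
  · intro q hq
    obtain ⟨hq, hPq⟩ := Finset.mem_filter.1 hq
    exact Finset.mem_filter.2 ⟨hS1 q hq, (hP _ _ (hS2 q hq) (hS3 q hq)).2 hPq⟩
  · intro p hp
    obtain ⟨hp, hPp⟩ := Finset.mem_filter.1 hp
    exact Finset.mem_filter.2 ⟨hT1 p hp, (hP _ _ (hT2 p hp) (hT3 p hp)).2 hPp⟩
  · intro q hq
    obtain ⟨hq, _⟩ := Finset.mem_filter.1 hq
    exact (hstar (toS q) (hS1 q hq)).unique
      ⟨hT1 _ (hS1 q hq), hT2 _ (hS1 q hq), hT3 _ (hS1 q hq)⟩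
      ⟨hq, (hS2 q hq).symm, (hS3 q hq).symm⟩
  · intro p hp
    obtain ⟨hp, _⟩ := Finset.mem_filter.1 hp
    exact (htri (toT p) (hT1 p hp)).unique
      ⟨hS1 _ (hT1 p hp), hS2 _ (hT1 p hp), hS3 _ (hT1 p hp)⟩
      ⟨hp, (hT2 p hp).symm, (hT3 p hp).symm⟩

private theorem lb_pigeon {β γ : Type*} (π₁ : R × C × S → β) (π₂ : R × C × S → γ)
    (hstar : ∀ p ∈ star, ∃! q, q ∈ tri ∧ π₁ q = π₁ p ∧ π₂ q = π₂ p)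
    (htri : ∀ q ∈ tri, ∃! p, p ∈ star ∧ π₁ p = π₁ q ∧ π₂ p = π₂ q)
    (X₁ X₂ : Finset (R × C × S)) (h1 : X₁ ⊆ star) (h2 : X₂ ⊆ tri)
    (hcard : X₂.card ≤ X₁.card) (a : R × C × S) (haS : a ∈ star) (haX : a ∉ X₁)
    (hmap : ∀ p ∈ X₁, ∀ q ∈ tri, π₁ q = π₁ p → π₂ q = π₂ p → q ∈ X₂)
    (q : R × C × S) (hq2 : q ∈ X₂) (hqa1 : π₁ q = π₁ a) (hqa2 : π₂ q = π₂ a) : False := by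
  choose! toT hT1 hT2 hT3 using fun p hp => (hstar p hp).exists
  have himg : ∀ p ∈ insert a X₁, toT p ∈ X₂ := by
    intro p hp
    rcases Finset.mem_insert.1 hp with rfl | hpX
    · have : toT p = q :=
        (hstar p haS).unique ⟨hT1 p haS, hT2 p haS, hT3 p haS⟩ ⟨h2 hq2, hqa1, hqa2⟩
      rw [this]; exact hq2
    · exact hmap p hpX (toT p) (hT1 p (h1 hpX)) (hT2 p (h1 hpX)) (hT3 p (h1 hpX))
  have hinj : Set.InjOn toT (insert a X₁ : Finset (R × C × S)) := by
    intro x hx y hy hxy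
    have hxs : x ∈ star := by
      rcases Finset.mem_insert.1 (by exact_mod_cast hx) with rfl | h
      · exact haS
      · exact h1 h
    have hys : y ∈ star := by
      rcases Finset.mem_insert.1 (by exact_mod_cast hy) with rfl | h
      · exact haS
      · exact h1 h
    exact (htri (toT x) (hT1 x hxs)).unique ⟨hxs, (hT2 x hxs).symm, (hT3 x hxs).symm⟩
      ⟨hys, by rw [hxy]; exact (hT2 y hys).symm, by rw [hxy]; exact (hT3 y hys).symm⟩
  have hle : (insert a X₁).card ≤ X₂.card := by
    calc (insert a X₁).card = ((insert a X₁).image toT).card :=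
          (Finset.card_image_of_injOn hinj).symm
      _ ≤ X₂.card := Finset.card_le_card (by
          intro z hz
          obtain ⟨p, hp, rfl⟩ := Finset.mem_image.1 hz
          exact himg p hp)
  rw [Finset.card_insert_of_notMem haX] at hle
  omega

private theorem lb_nonpos {w : R × C × S → ℚ}
    (htr : ∑ c ∈ tri, max (w c) 0 = ∑ p ∈ star, max (w p) 0)
    (hstar : ∀ p ∈ star, w p ≤ 0) : ∀ c ∈ tri, w c ≤ 0 := by
  have hz : ∑ p ∈ star, max (w p) 0 = 0 :=
    Finset.sum_eq_zero fun p hp => max_eq_right (hstar p hp)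
  have hall := (Finset.sum_eq_zero_iff_of_nonneg
    (fun c _ => le_max_right (w c) 0)).1 (htr.trans hz)
  intro c hc
  have h := hall c hc
  by_contra hpos
  push_neg at hpos
  rw [max_eq_left hpos.le] at h
  exact absurd h (ne_of_gt hpos)

end LBHelpers



section LBHelpers2

variable {star tri : Finset (R × C × S)}



private theorem lb_closed (bt : IsLatinBitrade star tri)
    (hind : BitradeIndecomposable star tri)
    (X₁ X₂ : Finset (R × C × S)) (h1 : X₁ ⊆ star) (h2 : X₂ ⊆ tri)
    (hne : X₁.Nonempty) (a : R × C × S) (haS : a ∈ star) (haX : a ∉ X₁)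
    (fwd : ∀ p ∈ X₁, ∀ q ∈ tri,
      ((q.1 = p.1 ∧ q.2.1 = p.2.1) ∨ (q.1 = p.1 ∧ q.2.2 = p.2.2) ∨
        (q.2.1 = p.2.1 ∧ q.2.2 = p.2.2)) → q ∈ X₂)
    (bwd : ∀ q ∈ X₂, ∀ p ∈ star,
      ((p.1 = q.1 ∧ p.2.1 = q.2.1) ∨ (p.1 = q.1 ∧ p.2.2 = q.2.2) ∨
        (p.2.1 = q.2.1 ∧ p.2.2 = q.2.2)) → p ∈ X₁) : False := by
  apply hind
  refine ⟨X₁, X₂, star \ X₁, tri \ X₂, hne, ⟨a, Finset.mem_sdiff.2 ⟨haS, haX⟩⟩,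
    Finset.disjoint_sdiff, Finset.disjoint_sdiff,
    Finset.union_sdiff_of_subset h1, Finset.union_sdiff_of_subset h2, ?_, ?_⟩
  · exact {
      disj := bt.disj.mono h1 h2
      r2a := fun p hp => lb_eu_restrict (bt.r2a p (h1 hp)) h2
        (fun q hq hPq => fwd p hp q hq (Or.inl hPq))
      r2b := fun p hp => lb_eu_restrict (bt.r2b p (h1 hp)) h2
        (fun q hq hPq => fwd p hp q hq (Or.inr (Or.inl hPq)))
      r2c := fun p hp => lb_eu_restrict (bt.r2c p (h1 hp)) h2
        (fun q hq hPq => fwd p hp q hq (Or.inr (Or.inr hPq)))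
      r3a := fun q hq => lb_eu_restrict (bt.r3a q (h2 hq)) h1
        (fun p hps hPp => bwd q hq p hps (Or.inl hPp))
      r3b := fun q hq => lb_eu_restrict (bt.r3b q (h2 hq)) h1
        (fun p hps hPp => bwd q hq p hps (Or.inr (Or.inl hPp)))
      r3c := fun q hq => lb_eu_restrict (bt.r3c q (h2 hq)) h1
        (fun p hps hPp => bwd q hq p hps (Or.inr (Or.inr hPp))) }
  · exact {
      disj := bt.disj.mono Finset.sdiff_subset Finset.sdiff_subset
      r2a := fun p hp => by
        obtain ⟨hps, hpn⟩ := Finset.mem_sdiff.1 hp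
        exact lb_eu_restrict (bt.r2a p hps) Finset.sdiff_subset (fun q hq hPq =>
          Finset.mem_sdiff.2 ⟨hq, fun hqX =>
            hpn (bwd q hqX p hps (Or.inl ⟨hPq.1.symm, hPq.2.symm⟩))⟩)
      r2b := fun p hp => by
        obtain ⟨hps, hpn⟩ := Finset.mem_sdiff.1 hp
        exact lb_eu_restrict (bt.r2b p hps) Finset.sdiff_subset (fun q hq hPq =>
          Finset.mem_sdiff.2 ⟨hq, fun hqX =>
            hpn (bwd q hqX p hps (Or.inr (Or.inl ⟨hPq.1.symm, hPq.2.symm⟩)))⟩)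
      r2c := fun p hp => by
        obtain ⟨hps, hpn⟩ := Finset.mem_sdiff.1 hp
        exact lb_eu_restrict (bt.r2c p hps) Finset.sdiff_subset (fun q hq hPq =>
          Finset.mem_sdiff.2 ⟨hq, fun hqX =>
            hpn (bwd q hqX p hps (Or.inr (Or.inr ⟨hPq.1.symm, hPq.2.symm⟩)))⟩)
      r3a := fun q hq => by
        obtain ⟨hqt, hqn⟩ := Finset.mem_sdiff.1 hq
        exact lb_eu_restrict (bt.r3a q hqt) Finset.sdiff_subset (fun p hps hPp =>
          Finset.mem_sdiff.2 ⟨hps, fun hpX =>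
            hqn (fwd p hpX q hqt (Or.inl ⟨hPp.1.symm, hPp.2.symm⟩))⟩)
      r3b := fun q hq => by
        obtain ⟨hqt, hqn⟩ := Finset.mem_sdiff.1 hq
        exact lb_eu_restrict (bt.r3b q hqt) Finset.sdiff_subset (fun p hps hPp =>
          Finset.mem_sdiff.2 ⟨hps, fun hpX =>
            hqn (fwd p hpX q hqt (Or.inr (Or.inl ⟨hPp.1.symm, hPp.2.symm⟩)))⟩)
      r3c := fun q hq => by
        obtain ⟨hqt, hqn⟩ := Finset.mem_sdiff.1 hq
        exact lb_eu_restrict (bt.r3c q hqt) Finset.sdiff_subset (fun p hps hPp =>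
          Finset.mem_sdiff.2 ⟨hps, fun hpX =>
            hqn (fwd p hpX q hqt (Or.inr (Or.inr ⟨hPp.1.symm, hPp.2.symm⟩)))⟩) }

private theorem lb_star_eq12 (bt : IsLatinBitrade star tri) {p p' : R × C × S}
    (hp : p ∈ star) (hp' : p' ∈ star) (e1 : p.1 = p'.1) (e2 : p.2.1 = p'.2.1) : p = p' := by
  obtain ⟨q, ⟨hq, hq1, hq2⟩, -⟩ := bt.r2a p hp
  exact ((bt.r3a q hq).unique ⟨hp, hq1.symm, hq2.symm⟩
    ⟨hp', (e1 ▸ hq1).symm, (e2 ▸ hq2).symm⟩)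

private theorem lb_star_eq13 (bt : IsLatinBitrade star tri) {p p' : R × C × S}
    (hp : p ∈ star) (hp' : p' ∈ star) (e1 : p.1 = p'.1) (e2 : p.2.2 = p'.2.2) : p = p' := by
  obtain ⟨q, ⟨hq, hq1, hq2⟩, -⟩ := bt.r2b p hp
  exact ((bt.r3b q hq).unique ⟨hp, hq1.symm, hq2.symm⟩
    ⟨hp', (e1 ▸ hq1).symm, (e2 ▸ hq2).symm⟩)

private theorem lb_star_eq23 (bt : IsLatinBitrade star tri) {p p' : R × C × S}
    (hp : p ∈ star) (hp' : p' ∈ star) (e1 : p.2.1 = p'.2.1) (e2 : p.2.2 = p'.2.2) : p = p' := by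
  obtain ⟨q, ⟨hq, hq1, hq2⟩, -⟩ := bt.r2c p hp
  exact ((bt.r3c q hq).unique ⟨hp, hq1.symm, hq2.symm⟩
    ⟨hp', (e1 ▸ hq1).symm, (e2 ▸ hq2).symm⟩)

end LBHelpers2
section LBHelpers3

variable {star tri : Finset (R × C × S)} {a : R × C × S}
variable {f1 : R → ℚ} {f2 : C → ℚ} {f3 : S → ℚ}

private theorem lb_sum1 (bt : IsLatinBitrade star tri)
    (ha : a ∈ star) (hsol : IsEqSolution star a f1 f2 f3) (u : R → ℚ) :
    ∑ c ∈ tri, u c.1 * (f3 c.2.2 - f1 c.1 - f2 c.2.1) = u a.1 := by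
  have e3 : ∑ c ∈ tri, u c.1 * f3 c.2.2 = ∑ p ∈ star, u p.1 * f3 p.2.2 :=
    lb_pair_sum (fun t => t.1) (fun t => t.2.2) bt.r2b bt.r3b _
      (fun x y h1 h2 => by simp only [h1, h2])
  have e1 : ∑ c ∈ tri, u c.1 * f1 c.1 = ∑ p ∈ star, u p.1 * f1 p.1 :=
    lb_pair_sum (fun t => t.1) (fun t => t.2.1) bt.r2a bt.r3a _
      (fun x y h1 _ => by simp only [h1])
  have e2 : ∑ c ∈ tri, u c.1 * f2 c.2.1 = ∑ p ∈ star, u p.1 * f2 p.2.1 :=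
    lb_pair_sum (fun t => t.1) (fun t => t.2.1) bt.r2a bt.r3a _
      (fun x y h1 h2 => by simp only [h1, h2])
  have key : ∀ s : Finset (R × C × S), ∑ c ∈ s, u c.1 * (f3 c.2.2 - f1 c.1 - f2 c.2.1)
      = (∑ c ∈ s, u c.1 * f3 c.2.2) - (∑ c ∈ s, u c.1 * f1 c.1)
        - (∑ c ∈ s, u c.1 * f2 c.2.1) := by
    intro s
    rw [← Finset.sum_sub_distrib, ← Finset.sum_sub_distrib]
    exact Finset.sum_congr rfl fun c _ => by ring
  rw [key, e1, e2, e3, ← key]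
  have hterm : ∀ p ∈ star, u p.1 * (f3 p.2.2 - f1 p.1 - f2 p.2.1)
      = if p = a then u a.1 else 0 := by
    intro p hp
    by_cases hpa : p = a
    · subst hpa; rw [if_pos rfl, hsol.1, hsol.2.1, hsol.2.2.1]; ring
    · rw [if_neg hpa]
      have h := hsol.2.2.2 p hp hpa
      have hz : f3 p.2.2 - f1 p.1 - f2 p.2.1 = 0 := by linarith
      rw [hz, mul_zero]
  rw [Finset.sum_congr rfl hterm, Finset.sum_ite_eq' star a fun _ => u a.1, if_pos ha]

private theorem lb_sum2 (bt : IsLatinBitrade star tri)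
    (ha : a ∈ star) (hsol : IsEqSolution star a f1 f2 f3) (u : C → ℚ) :
    ∑ c ∈ tri, u c.2.1 * (f3 c.2.2 - f1 c.1 - f2 c.2.1) = u a.2.1 := by
  have e3 : ∑ c ∈ tri, u c.2.1 * f3 c.2.2 = ∑ p ∈ star, u p.2.1 * f3 p.2.2 :=
    lb_pair_sum (fun t => t.2.1) (fun t => t.2.2) bt.r2c bt.r3c _
      (fun x y h1 h2 => by simp only [h1, h2])
  have e1 : ∑ c ∈ tri, u c.2.1 * f1 c.1 = ∑ p ∈ star, u p.2.1 * f1 p.1 :=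
    lb_pair_sum (fun t => t.1) (fun t => t.2.1) bt.r2a bt.r3a _
      (fun x y h1 h2 => by simp only [h1, h2])
  have e2 : ∑ c ∈ tri, u c.2.1 * f2 c.2.1 = ∑ p ∈ star, u p.2.1 * f2 p.2.1 :=
    lb_pair_sum (fun t => t.1) (fun t => t.2.1) bt.r2a bt.r3a _
      (fun x y _ h2 => by simp only [h2])
  have key : ∀ s : Finset (R × C × S), ∑ c ∈ s, u c.2.1 * (f3 c.2.2 - f1 c.1 - f2 c.2.1)
      = (∑ c ∈ s, u c.2.1 * f3 c.2.2) - (∑ c ∈ s, u c.2.1 * f1 c.1)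
        - (∑ c ∈ s, u c.2.1 * f2 c.2.1) := by
    intro s
    rw [← Finset.sum_sub_distrib, ← Finset.sum_sub_distrib]
    exact Finset.sum_congr rfl fun c _ => by ring
  rw [key, e1, e2, e3, ← key]
  have hterm : ∀ p ∈ star, u p.2.1 * (f3 p.2.2 - f1 p.1 - f2 p.2.1)
      = if p = a then u a.2.1 else 0 := by
    intro p hp
    by_cases hpa : p = a
    · subst hpa; rw [if_pos rfl, hsol.1, hsol.2.1, hsol.2.2.1]; ring
    · rw [if_neg hpa]
      have h := hsol.2.2.2 p hp hpa
      have hz : f3 p.2.2 - f1 p.1 - f2 p.2.1 = 0 := by linarith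
      rw [hz, mul_zero]
  rw [Finset.sum_congr rfl hterm, Finset.sum_ite_eq' star a fun _ => u a.2.1, if_pos ha]

private theorem lb_sum3 (bt : IsLatinBitrade star tri)
    (ha : a ∈ star) (hsol : IsEqSolution star a f1 f2 f3) (u : S → ℚ) :
    ∑ c ∈ tri, u c.2.2 * (f3 c.2.2 - f1 c.1 - f2 c.2.1) = u a.2.2 := by
  have e3 : ∑ c ∈ tri, u c.2.2 * f3 c.2.2 = ∑ p ∈ star, u p.2.2 * f3 p.2.2 :=
    lb_pair_sum (fun t => t.1) (fun t => t.2.2) bt.r2b bt.r3b _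
      (fun x y _ h2 => by simp only [h2])
  have e1 : ∑ c ∈ tri, u c.2.2 * f1 c.1 = ∑ p ∈ star, u p.2.2 * f1 p.1 :=
    lb_pair_sum (fun t => t.1) (fun t => t.2.2) bt.r2b bt.r3b _
      (fun x y h1 h2 => by simp only [h1, h2])
  have e2 : ∑ c ∈ tri, u c.2.2 * f2 c.2.1 = ∑ p ∈ star, u p.2.2 * f2 p.2.1 :=
    lb_pair_sum (fun t => t.2.1) (fun t => t.2.2) bt.r2c bt.r3c _
      (fun x y h1 h2 => by simp only [h1, h2])
  have key : ∀ s : Finset (R × C × S), ∑ c ∈ s, u c.2.2 * (f3 c.2.2 - f1 c.1 - f2 c.2.1)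
      = (∑ c ∈ s, u c.2.2 * f3 c.2.2) - (∑ c ∈ s, u c.2.2 * f1 c.1)
        - (∑ c ∈ s, u c.2.2 * f2 c.2.1) := by
    intro s
    rw [← Finset.sum_sub_distrib, ← Finset.sum_sub_distrib]
    exact Finset.sum_congr rfl fun c _ => by ring
  rw [key, e1, e2, e3, ← key]
  have hterm : ∀ p ∈ star, u p.2.2 * (f3 p.2.2 - f1 p.1 - f2 p.2.1)
      = if p = a then u a.2.2 else 0 := by
    intro p hp
    by_cases hpa : p = a
    · subst hpa; rw [if_pos rfl, hsol.1, hsol.2.1, hsol.2.2.1]; ring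
    · rw [if_neg hpa]
      have h := hsol.2.2.2 p hp hpa
      have hz : f3 p.2.2 - f1 p.1 - f2 p.2.1 = 0 := by linarith
      rw [hz, mul_zero]
  rw [Finset.sum_congr rfl hterm, Finset.sum_ite_eq' star a fun _ => u a.2.2, if_pos ha]

end LBHelpers3

section LBHelpers4

variable {star tri : Finset (R × C × S)} {a : R × C × S}
variable {f1 : R → ℚ} {f2 : C → ℚ} {f3 : S → ℚ}

private theorem lb_ind1 (bt : IsLatinBitrade star tri)
    (ha : a ∈ star) (hsol : IsEqSolution star a f1 f2 f3)
    (P : R → Prop) [DecidablePred P] (hPa : ¬ P a.1)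
    (hsign : (∀ c ∈ tri, P c.1 → 0 ≤ f3 c.2.2 - f1 c.1 - f2 c.2.1) ∨
             (∀ c ∈ tri, P c.1 → f3 c.2.2 - f1 c.1 - f2 c.2.1 ≤ 0)) :
    ∀ c ∈ tri, P c.1 → f3 c.2.2 - f1 c.1 - f2 c.2.1 = 0 := by
  have hs := lb_sum1 bt ha hsol (fun r => if P r then 1 else 0)
  rw [if_neg hPa] at hs
  rcases hsign with hsign | hsign
  · have hnn : ∀ c ∈ tri, 0 ≤ (if P c.1 then (1 : ℚ) else 0) * (f3 c.2.2 - f1 c.1 - f2 c.2.1) := by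
      intro c hc; by_cases h : P c.1
      · rw [if_pos h, one_mul]; exact hsign c hc h
      · rw [if_neg h, zero_mul]
    have hall := (Finset.sum_eq_zero_iff_of_nonneg hnn).1 hs
    intro c hc hPc
    have h := hall c hc
    rw [if_pos hPc, one_mul] at h
    exact h
  · have hnn : ∀ c ∈ tri, (if P c.1 then (1 : ℚ) else 0) * (f3 c.2.2 - f1 c.1 - f2 c.2.1) ≤ 0 := by
      intro c hc; by_cases h : P c.1
      · rw [if_pos h, one_mul]; exact hsign c hc h
      · rw [if_neg h, zero_mul]
    have hall := (Finset.sum_eq_zero_iff_of_nonpos hnn).1 hs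
    intro c hc hPc
    have h := hall c hc
    rw [if_pos hPc, one_mul] at h
    exact h

private theorem lb_ind2 (bt : IsLatinBitrade star tri)
    (ha : a ∈ star) (hsol : IsEqSolution star a f1 f2 f3)
    (P : C → Prop) [DecidablePred P] (hPa : ¬ P a.2.1)
    (hsign : (∀ c ∈ tri, P c.2.1 → 0 ≤ f3 c.2.2 - f1 c.1 - f2 c.2.1) ∨
             (∀ c ∈ tri, P c.2.1 → f3 c.2.2 - f1 c.1 - f2 c.2.1 ≤ 0)) :
    ∀ c ∈ tri, P c.2.1 → f3 c.2.2 - f1 c.1 - f2 c.2.1 = 0 := by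
  have hs := lb_sum2 bt ha hsol (fun x => if P x then 1 else 0)
  rw [if_neg hPa] at hs
  rcases hsign with hsign | hsign
  · have hnn : ∀ c ∈ tri, 0 ≤ (if P c.2.1 then (1 : ℚ) else 0) * (f3 c.2.2 - f1 c.1 - f2 c.2.1) := by
      intro c hc; by_cases h : P c.2.1
      · rw [if_pos h, one_mul]; exact hsign c hc h
      · rw [if_neg h, zero_mul]
    have hall := (Finset.sum_eq_zero_iff_of_nonneg hnn).1 hs
    intro c hc hPc
    have h := hall c hc
    rw [if_pos hPc, one_mul] at h
    exact h
  · have hnn : ∀ c ∈ tri, (if P c.2.1 then (1 : ℚ) else 0) * (f3 c.2.2 - f1 c.1 - f2 c.2.1) ≤ 0 := by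
      intro c hc; by_cases h : P c.2.1
      · rw [if_pos h, one_mul]; exact hsign c hc h
      · rw [if_neg h, zero_mul]
    have hall := (Finset.sum_eq_zero_iff_of_nonpos hnn).1 hs
    intro c hc hPc
    have h := hall c hc
    rw [if_pos hPc, one_mul] at h
    exact h

private theorem lb_ind3 (bt : IsLatinBitrade star tri)
    (ha : a ∈ star) (hsol : IsEqSolution star a f1 f2 f3)
    (P : S → Prop) [DecidablePred P] (hPa : ¬ P a.2.2)
    (hsign : (∀ c ∈ tri, P c.2.2 → 0 ≤ f3 c.2.2 - f1 c.1 - f2 c.2.1) ∨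
             (∀ c ∈ tri, P c.2.2 → f3 c.2.2 - f1 c.1 - f2 c.2.1 ≤ 0)) :
    ∀ c ∈ tri, P c.2.2 → f3 c.2.2 - f1 c.1 - f2 c.2.1 = 0 := by
  have hs := lb_sum3 bt ha hsol (fun y => if P y then 1 else 0)
  rw [if_neg hPa] at hs
  rcases hsign with hsign | hsign
  · have hnn : ∀ c ∈ tri, 0 ≤ (if P c.2.2 then (1 : ℚ) else 0) * (f3 c.2.2 - f1 c.1 - f2 c.2.1) := by
      intro c hc; by_cases h : P c.2.2
      · rw [if_pos h, one_mul]; exact hsign c hc h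
      · rw [if_neg h, zero_mul]
    have hall := (Finset.sum_eq_zero_iff_of_nonneg hnn).1 hs
    intro c hc hPc
    have h := hall c hc
    rw [if_pos hPc, one_mul] at h
    exact h
  · have hnn : ∀ c ∈ tri, (if P c.2.2 then (1 : ℚ) else 0) * (f3 c.2.2 - f1 c.1 - f2 c.2.1) ≤ 0 := by
      intro c hc; by_cases h : P c.2.2
      · rw [if_pos h, one_mul]; exact hsign c hc h
      · rw [if_neg h, zero_mul]
    have hall := (Finset.sum_eq_zero_iff_of_nonpos hnn).1 hs
    intro c hc hPc
    have h := hall c hc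
    rw [if_pos hPc, one_mul] at h
    exact h

end LBHelpers4

section LBHelpers5

variable {star tri : Finset (R × C × S)} {a : R × C × S}
variable {f1 : R → ℚ} {f2 : C → ℚ} {f3 : S → ℚ}

private theorem lb_P1 (bt : IsLatinBitrade star tri) (hind : BitradeIndecomposable star tri)
    (ha : a ∈ star) (hsol : IsEqSolution star a f1 f2 f3) :
    ∀ p ∈ star, 0 ≤ f1 p.1 := by
  by_contra hcon
  push_neg at hcon
  obtain ⟨p₀, hp₀, hp₀neg⟩ := hcon
  obtain ⟨pm, hpm, hmin⟩ := Finset.exists_min_image star (fun p => f1 p.1) ⟨p₀, hp₀⟩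
  set α := f1 pm.1 with hαdef
  have hαneg : α < 0 := lt_of_le_of_lt (hmin p₀ hp₀) hp₀neg
  have ha1 : f1 a.1 = 0 := hsol.1
  have hPa : ¬ (f1 a.1 = α) := by rw [ha1]; exact ne_of_gt hαneg
  have hineq : ∀ c ∈ tri, α ≤ f3 c.2.2 - f2 c.2.1 := by
    have hh := lb_nonpos (w := fun t => α - (f3 t.2.2 - f2 t.2.1))
      (lb_pair_sum (fun t => t.2.1) (fun t => t.2.2) bt.r2c bt.r3c _
        (fun x y h1 h2 => by simp only [h1, h2]))
      (fun p hp => by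
        show α - (f3 p.2.2 - f2 p.2.1) ≤ 0
        by_cases hpa : p = a
        · subst hpa; rw [hsol.2.1, hsol.2.2.1]; linarith
        · have h := hsol.2.2.2 p hp hpa
          have hm := hmin p hp
          linarith)
    intro c hc; have := hh c hc; linarith
  have hdeg : ∀ c ∈ tri, f1 c.1 = α → f3 c.2.2 - f1 c.1 - f2 c.2.1 = 0 :=
    lb_ind1 bt ha hsol (fun r => f1 r = α) hPa
      (Or.inl fun c hc hPc => by have := hineq c hc; rw [hPc]; linarith)
  set X₁ := star.filter (fun p => f1 p.1 = α) with hX₁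
  set X₂ := tri.filter (fun c => f1 c.1 = α) with hX₂
  set Y₁ := tri.filter (fun c => f3 c.2.2 - f2 c.2.1 = α) with hY₁
  have hc12 : X₂.card = X₁.card :=
    lb_pair_card (fun t => t.1) (fun t => t.2.1) bt.r2a bt.r3a _
      (fun x y h1 _ => by have e1 : x.1 = y.1 := h1; rw [e1])
  have hcY : Y₁.card = (star.filter (fun p => f3 p.2.2 - f2 p.2.1 = α)).card :=
    lb_pair_card (fun t => t.2.1) (fun t => t.2.2) bt.r2c bt.r3c _
      (fun x y h1 h2 => by
        have e1 : x.2.1 = y.2.1 := h1; have e2 : x.2.2 = y.2.2 := h2; rw [e1, e2])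
  have hYX : star.filter (fun p => f3 p.2.2 - f2 p.2.1 = α) = X₁ := by
    apply Finset.filter_congr
    intro p hp
    by_cases hpa : p = a
    · subst hpa
      rw [hsol.2.1, hsol.2.2.1, ha1]
      constructor <;> intro h <;> linarith
    · have h := hsol.2.2.2 p hp hpa
      constructor <;> intro hh <;> linarith
  have hsub : X₂ ⊆ Y₁ := by
    intro c hc
    obtain ⟨hct, hcα⟩ := Finset.mem_filter.1 hc
    exact Finset.mem_filter.2 ⟨hct, by have := hdeg c hct hcα; linarith⟩
  have hXY : X₂ = Y₁ := Finset.eq_of_subset_of_card_le hsub (by rw [hcY, hYX, ← hc12])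
  refine lb_closed bt hind X₁ X₂ (Finset.filter_subset _ _) (Finset.filter_subset _ _)
    ⟨pm, Finset.mem_filter.2 ⟨hpm, rfl⟩⟩ a ha
    (fun h => hPa (Finset.mem_filter.1 h).2) ?_ ?_
  · intro p hp q hq hsh
    obtain ⟨hps, hpα⟩ := Finset.mem_filter.1 hp
    have hpa : p ≠ a := fun h => hPa (h ▸ hpα)
    rcases hsh with ⟨e1, _⟩ | ⟨e1, _⟩ | ⟨e1, e2⟩
    · exact Finset.mem_filter.2 ⟨hq, by rw [e1]; exact hpα⟩
    · exact Finset.mem_filter.2 ⟨hq, by rw [e1]; exact hpα⟩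
    · rw [hXY]
      refine Finset.mem_filter.2 ⟨hq, ?_⟩
      have h := hsol.2.2.2 p hps hpa
      rw [e1, e2]; linarith
  · intro q hq p hps hsh
    obtain ⟨hqt, hqα⟩ := Finset.mem_filter.1 hq
    have hδ := hdeg q hqt hqα
    rcases hsh with ⟨e1, _⟩ | ⟨e1, _⟩ | ⟨e1, e2⟩
    · exact Finset.mem_filter.2 ⟨hps, by rw [e1]; exact hqα⟩
    · exact Finset.mem_filter.2 ⟨hps, by rw [e1]; exact hqα⟩
    · have hv : f3 p.2.2 - f2 p.2.1 = α := by rw [e1, e2]; linarith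
      have hpa : p ≠ a := by
        intro h; rw [h, hsol.2.1, hsol.2.2.1] at hv; linarith
      have h := hsol.2.2.2 p hps hpa
      exact Finset.mem_filter.2 ⟨hps, by linarith⟩

private theorem lb_P2 (bt : IsLatinBitrade star tri) (hind : BitradeIndecomposable star tri)
    (ha : a ∈ star) (hsol : IsEqSolution star a f1 f2 f3) :
    ∀ p ∈ star, 0 ≤ f2 p.2.1 := by
  by_contra hcon
  push_neg at hcon
  obtain ⟨p₀, hp₀, hp₀neg⟩ := hcon
  obtain ⟨pm, hpm, hmin⟩ := Finset.exists_min_image star (fun p => f2 p.2.1) ⟨p₀, hp₀⟩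
  set β := f2 pm.2.1 with hβdef
  have hβneg : β < 0 := lt_of_le_of_lt (hmin p₀ hp₀) hp₀neg
  have ha2 : f2 a.2.1 = 0 := hsol.2.1
  have hPa : ¬ (f2 a.2.1 = β) := by rw [ha2]; exact ne_of_gt hβneg
  have hineq : ∀ c ∈ tri, β ≤ f3 c.2.2 - f1 c.1 := by
    have hh := lb_nonpos (w := fun t => β - (f3 t.2.2 - f1 t.1))
      (lb_pair_sum (fun t => t.1) (fun t => t.2.2) bt.r2b bt.r3b _
        (fun x y h1 h2 => by simp only [h1, h2]))
      (fun p hp => by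
        show β - (f3 p.2.2 - f1 p.1) ≤ 0
        by_cases hpa : p = a
        · subst hpa; rw [hsol.1, hsol.2.2.1]; linarith
        · have h := hsol.2.2.2 p hp hpa
          have hm := hmin p hp
          linarith)
    intro c hc; have := hh c hc; linarith
  have hdeg : ∀ c ∈ tri, f2 c.2.1 = β → f3 c.2.2 - f1 c.1 - f2 c.2.1 = 0 :=
    lb_ind2 bt ha hsol (fun x => f2 x = β) hPa
      (Or.inl fun c hc hPc => by have := hineq c hc; rw [hPc]; linarith)
  set X₁ := star.filter (fun p => f2 p.2.1 = β) with hX₁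
  set X₂ := tri.filter (fun c => f2 c.2.1 = β) with hX₂
  set Y₁ := tri.filter (fun c => f3 c.2.2 - f1 c.1 = β) with hY₁
  have hc12 : X₂.card = X₁.card :=
    lb_pair_card (fun t => t.1) (fun t => t.2.1) bt.r2a bt.r3a _
      (fun x y _ h2 => by have e2 : x.2.1 = y.2.1 := h2; rw [e2])
  have hcY : Y₁.card = (star.filter (fun p => f3 p.2.2 - f1 p.1 = β)).card :=
    lb_pair_card (fun t => t.1) (fun t => t.2.2) bt.r2b bt.r3b _
      (fun x y h1 h2 => by
        have e1 : x.1 = y.1 := h1; have e2 : x.2.2 = y.2.2 := h2; rw [e1, e2])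
  have hYX : star.filter (fun p => f3 p.2.2 - f1 p.1 = β) = X₁ := by
    apply Finset.filter_congr
    intro p hp
    by_cases hpa : p = a
    · subst hpa
      rw [hsol.1, hsol.2.2.1, ha2]
      constructor <;> intro h <;> linarith
    · have h := hsol.2.2.2 p hp hpa
      constructor <;> intro hh <;> linarith
  have hsub : X₂ ⊆ Y₁ := by
    intro c hc
    obtain ⟨hct, hcβ⟩ := Finset.mem_filter.1 hc
    exact Finset.mem_filter.2 ⟨hct, by have := hdeg c hct hcβ; linarith⟩
  have hXY : X₂ = Y₁ := Finset.eq_of_subset_of_card_le hsub (by rw [hcY, hYX, ← hc12])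
  refine lb_closed bt hind X₁ X₂ (Finset.filter_subset _ _) (Finset.filter_subset _ _)
    ⟨pm, Finset.mem_filter.2 ⟨hpm, rfl⟩⟩ a ha
    (fun h => hPa (Finset.mem_filter.1 h).2) ?_ ?_
  · intro p hp q hq hsh
    obtain ⟨hps, hpβ⟩ := Finset.mem_filter.1 hp
    have hpa : p ≠ a := fun h => hPa (h ▸ hpβ)
    rcases hsh with ⟨_, e2⟩ | ⟨e1, e2⟩ | ⟨e1, _⟩
    · exact Finset.mem_filter.2 ⟨hq, by rw [e2]; exact hpβ⟩
    · rw [hXY]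
      refine Finset.mem_filter.2 ⟨hq, ?_⟩
      have h := hsol.2.2.2 p hps hpa
      rw [e1, e2]; linarith
    · exact Finset.mem_filter.2 ⟨hq, by rw [e1]; exact hpβ⟩
  · intro q hq p hps hsh
    obtain ⟨hqt, hqβ⟩ := Finset.mem_filter.1 hq
    have hδ := hdeg q hqt hqβ
    rcases hsh with ⟨_, e2⟩ | ⟨e1, e2⟩ | ⟨e1, _⟩
    · exact Finset.mem_filter.2 ⟨hps, by rw [e2]; exact hqβ⟩
    · have hv : f3 p.2.2 - f1 p.1 = β := by rw [e1, e2]; linarith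
      have hpa : p ≠ a := by
        intro h; rw [h, hsol.1, hsol.2.2.1] at hv; linarith
      have h := hsol.2.2.2 p hps hpa
      exact Finset.mem_filter.2 ⟨hps, by linarith⟩
    · exact Finset.mem_filter.2 ⟨hps, by rw [e1]; exact hqβ⟩

private theorem lb_P3 (bt : IsLatinBitrade star tri) (hind : BitradeIndecomposable star tri)
    (ha : a ∈ star) (hsol : IsEqSolution star a f1 f2 f3) :
    ∀ p ∈ star, f3 p.2.2 ≤ 1 := by
  by_contra hcon
  push_neg at hcon
  obtain ⟨p₀, hp₀, hp₀gt⟩ := hcon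
  obtain ⟨pM, hpM, hmax⟩ := Finset.exists_max_image star (fun p => f3 p.2.2) ⟨p₀, hp₀⟩
  set Γ := f3 pM.2.2 with hΓdef
  have hΓgt : 1 < Γ := lt_of_lt_of_le hp₀gt (hmax p₀ hp₀)
  have ha3 : f3 a.2.2 = 1 := hsol.2.2.1
  have hPa : ¬ (f3 a.2.2 = Γ) := by rw [ha3]; exact ne_of_lt hΓgt
  have hineq : ∀ c ∈ tri, f1 c.1 + f2 c.2.1 ≤ Γ := by
    have hh := lb_nonpos (w := fun t => f1 t.1 + f2 t.2.1 - Γ)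
      (lb_pair_sum (fun t => t.1) (fun t => t.2.1) bt.r2a bt.r3a _
        (fun x y h1 h2 => by simp only [h1, h2]))
      (fun p hp => by
        show f1 p.1 + f2 p.2.1 - Γ ≤ 0
        by_cases hpa : p = a
        · subst hpa; rw [hsol.1, hsol.2.1]; linarith
        · have h := hsol.2.2.2 p hp hpa
          have hm := hmax p hp
          linarith)
    intro c hc; have := hh c hc; linarith
  have hdeg : ∀ c ∈ tri, f3 c.2.2 = Γ → f3 c.2.2 - f1 c.1 - f2 c.2.1 = 0 :=
    lb_ind3 bt ha hsol (fun y => f3 y = Γ) hPa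
      (Or.inl fun c hc hPc => by have := hineq c hc; rw [hPc]; linarith)
  set X₁ := star.filter (fun p => f3 p.2.2 = Γ) with hX₁
  set X₂ := tri.filter (fun c => f3 c.2.2 = Γ) with hX₂
  set Y₁ := tri.filter (fun c => f1 c.1 + f2 c.2.1 = Γ) with hY₁
  have hc12 : X₂.card = X₁.card :=
    lb_pair_card (fun t => t.1) (fun t => t.2.2) bt.r2b bt.r3b _
      (fun x y _ h2 => by have e2 : x.2.2 = y.2.2 := h2; rw [e2])
  have hcY : Y₁.card = (star.filter (fun p => f1 p.1 + f2 p.2.1 = Γ)).card :=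
    lb_pair_card (fun t => t.1) (fun t => t.2.1) bt.r2a bt.r3a _
      (fun x y h1 h2 => by
        have e1 : x.1 = y.1 := h1; have e2 : x.2.1 = y.2.1 := h2; rw [e1, e2])
  have hYX : star.filter (fun p => f1 p.1 + f2 p.2.1 = Γ) = X₁ := by
    apply Finset.filter_congr
    intro p hp
    by_cases hpa : p = a
    · subst hpa
      rw [hsol.1, hsol.2.1, ha3]
      constructor <;> intro h <;> linarith
    · have h := hsol.2.2.2 p hp hpa
      constructor <;> intro hh <;> linarith
  have hsub : X₂ ⊆ Y₁ := by
    intro c hc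
    obtain ⟨hct, hcΓ⟩ := Finset.mem_filter.1 hc
    exact Finset.mem_filter.2 ⟨hct, by have := hdeg c hct hcΓ; linarith⟩
  have hXY : X₂ = Y₁ := Finset.eq_of_subset_of_card_le hsub (by rw [hcY, hYX, ← hc12])
  refine lb_closed bt hind X₁ X₂ (Finset.filter_subset _ _) (Finset.filter_subset _ _)
    ⟨pM, Finset.mem_filter.2 ⟨hpM, rfl⟩⟩ a ha
    (fun h => hPa (Finset.mem_filter.1 h).2) ?_ ?_
  · intro p hp q hq hsh
    obtain ⟨hps, hpΓ⟩ := Finset.mem_filter.1 hp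
    have hpa : p ≠ a := fun h => hPa (h ▸ hpΓ)
    rcases hsh with ⟨e1, e2⟩ | ⟨_, e2⟩ | ⟨_, e2⟩
    · rw [hXY]
      refine Finset.mem_filter.2 ⟨hq, ?_⟩
      have h := hsol.2.2.2 p hps hpa
      rw [e1, e2]; linarith
    · exact Finset.mem_filter.2 ⟨hq, by rw [e2]; exact hpΓ⟩
    · exact Finset.mem_filter.2 ⟨hq, by rw [e2]; exact hpΓ⟩
  · intro q hq p hps hsh
    obtain ⟨hqt, hqΓ⟩ := Finset.mem_filter.1 hq
    have hδ := hdeg q hqt hqΓ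
    rcases hsh with ⟨e1, e2⟩ | ⟨_, e2⟩ | ⟨_, e2⟩
    · have hv : f1 p.1 + f2 p.2.1 = Γ := by rw [e1, e2]; linarith
      have hpa : p ≠ a := by
        intro h; rw [h, hsol.1, hsol.2.1] at hv; linarith
      have h := hsol.2.2.2 p hps hpa
      exact Finset.mem_filter.2 ⟨hps, by linarith⟩
    · exact Finset.mem_filter.2 ⟨hps, by rw [e2]; exact hqΓ⟩
    · exact Finset.mem_filter.2 ⟨hps, by rw [e2]; exact hqΓ⟩

end LBHelpers5

section LBHelpers6

variable {star tri : Finset (R × C × S)} {a : R × C × S}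
variable {f1 : R → ℚ} {f2 : C → ℚ} {f3 : S → ℚ}

private theorem lb_P1t (bt : IsLatinBitrade star tri) (hind : BitradeIndecomposable star tri)
    (ha : a ∈ star) (hsol : IsEqSolution star a f1 f2 f3) :
    ∀ c ∈ tri, 0 ≤ f1 c.1 := by
  have hh := lb_nonpos (w := fun t => -f1 t.1)
    (lb_pair_sum (fun t => t.1) (fun t => t.2.1) bt.r2a bt.r3a _
      (fun x y h1 _ => by have e1 : x.1 = y.1 := h1; simp only [e1]))
    (fun p hp => by
      show -f1 p.1 ≤ 0
      have := lb_P1 bt hind ha hsol p hp; linarith)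
  intro c hc; have := hh c hc; linarith

private theorem lb_P2t (bt : IsLatinBitrade star tri) (hind : BitradeIndecomposable star tri)
    (ha : a ∈ star) (hsol : IsEqSolution star a f1 f2 f3) :
    ∀ c ∈ tri, 0 ≤ f2 c.2.1 := by
  have hh := lb_nonpos (w := fun t => -f2 t.2.1)
    (lb_pair_sum (fun t => t.1) (fun t => t.2.1) bt.r2a bt.r3a _
      (fun x y _ h2 => by have e2 : x.2.1 = y.2.1 := h2; simp only [e2]))
    (fun p hp => by
      show -f2 p.2.1 ≤ 0
      have := lb_P2 bt hind ha hsol p hp; linarith)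
  intro c hc; have := hh c hc; linarith

private theorem lb_P3t (bt : IsLatinBitrade star tri) (hind : BitradeIndecomposable star tri)
    (ha : a ∈ star) (hsol : IsEqSolution star a f1 f2 f3) :
    ∀ c ∈ tri, f3 c.2.2 ≤ 1 := by
  have hh := lb_nonpos (w := fun t => f3 t.2.2 - 1)
    (lb_pair_sum (fun t => t.2.1) (fun t => t.2.2) bt.r2c bt.r3c _
      (fun x y _ h2 => by have e2 : x.2.2 = y.2.2 := h2; simp only [e2]))
    (fun p hp => by
      show f3 p.2.2 - 1 ≤ 0
      have := lb_P3 bt hind ha hsol p hp; linarith)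
  intro c hc; have := hh c hc; linarith

private theorem lb_B1 (bt : IsLatinBitrade star tri) (hind : BitradeIndecomposable star tri)
    (ha : a ∈ star) (hsol : IsEqSolution star a f1 f2 f3) :
    ∀ c ∈ tri, f2 c.2.1 ≤ f3 c.2.2 := by
  have hh := lb_nonpos (w := fun t => f2 t.2.1 - f3 t.2.2)
    (lb_pair_sum (fun t => t.2.1) (fun t => t.2.2) bt.r2c bt.r3c _
      (fun x y h1 h2 => by
        have e1 : x.2.1 = y.2.1 := h1; have e2 : x.2.2 = y.2.2 := h2; simp only [e1, e2]))
    (fun p hp => by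
      show f2 p.2.1 - f3 p.2.2 ≤ 0
      by_cases hpa : p = a
      · rw [hpa, hsol.2.1, hsol.2.2.1]; linarith
      · have h := hsol.2.2.2 p hp hpa
        have := lb_P1 bt hind ha hsol p hp
        linarith)
  intro c hc; have := hh c hc; linarith

private theorem lb_B2 (bt : IsLatinBitrade star tri) (hind : BitradeIndecomposable star tri)
    (ha : a ∈ star) (hsol : IsEqSolution star a f1 f2 f3) :
    ∀ c ∈ tri, f1 c.1 ≤ f3 c.2.2 := by
  have hh := lb_nonpos (w := fun t => f1 t.1 - f3 t.2.2)
    (lb_pair_sum (fun t => t.1) (fun t => t.2.2) bt.r2b bt.r3b _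
      (fun x y h1 h2 => by
        have e1 : x.1 = y.1 := h1; have e2 : x.2.2 = y.2.2 := h2; simp only [e1, e2]))
    (fun p hp => by
      show f1 p.1 - f3 p.2.2 ≤ 0
      by_cases hpa : p = a
      · rw [hpa, hsol.1, hsol.2.2.1]; linarith
      · have h := hsol.2.2.2 p hp hpa
        have := lb_P2 bt hind ha hsol p hp
        linarith)
  intro c hc; have := hh c hc; linarith

private theorem lb_B3 (bt : IsLatinBitrade star tri) (hind : BitradeIndecomposable star tri)
    (ha : a ∈ star) (hsol : IsEqSolution star a f1 f2 f3) :
    ∀ c ∈ tri, f1 c.1 + f2 c.2.1 ≤ 1 := by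
  have hh := lb_nonpos (w := fun t => f1 t.1 + f2 t.2.1 - 1)
    (lb_pair_sum (fun t => t.1) (fun t => t.2.1) bt.r2a bt.r3a _
      (fun x y h1 h2 => by
        have e1 : x.1 = y.1 := h1; have e2 : x.2.1 = y.2.1 := h2; simp only [e1, e2]))
    (fun p hp => by
      show f1 p.1 + f2 p.2.1 - 1 ≤ 0
      by_cases hpa : p = a
      · rw [hpa, hsol.1, hsol.2.1]; linarith
      · have h := hsol.2.2.2 p hp hpa
        have := lb_P3 bt hind ha hsol p hp
        linarith)
  intro c hc; have := hh c hc; linarith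

private theorem lb_D1 (bt : IsLatinBitrade star tri) (hind : BitradeIndecomposable star tri)
    (ha : a ∈ star) (hsol : IsEqSolution star a f1 f2 f3)
    (r : R) (h0 : f1 r = 0) (hra : r ≠ a.1) :
    ∀ c ∈ tri, c.1 = r → f3 c.2.2 - f1 c.1 - f2 c.2.1 = 0 :=
  lb_ind1 bt ha hsol (fun r' => r' = r) (fun h => hra h.symm)
    (Or.inl fun c hc hPc => by
      have hb := lb_B1 bt hind ha hsol c hc
      have h1 : f1 c.1 = 0 := by rw [hPc, h0]
      linarith)

private theorem lb_D2 (bt : IsLatinBitrade star tri) (hind : BitradeIndecomposable star tri)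
    (ha : a ∈ star) (hsol : IsEqSolution star a f1 f2 f3)
    (x : C) (h0 : f2 x = 0) (hxa : x ≠ a.2.1) :
    ∀ c ∈ tri, c.2.1 = x → f3 c.2.2 - f1 c.1 - f2 c.2.1 = 0 :=
  lb_ind2 bt ha hsol (fun x' => x' = x) (fun h => hxa h.symm)
    (Or.inl fun c hc hPc => by
      have hb := lb_B2 bt hind ha hsol c hc
      have h2 : f2 c.2.1 = 0 := by rw [hPc, h0]
      linarith)

private theorem lb_D3 (bt : IsLatinBitrade star tri) (hind : BitradeIndecomposable star tri)
    (ha : a ∈ star) (hsol : IsEqSolution star a f1 f2 f3)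
    (y : S) (h1 : f3 y = 1) (hya : y ≠ a.2.2) :
    ∀ c ∈ tri, c.2.2 = y → f3 c.2.2 - f1 c.1 - f2 c.2.1 = 0 :=
  lb_ind3 bt ha hsol (fun y' => y' = y) (fun h => hya h.symm)
    (Or.inl fun c hc hPc => by
      have hb := lb_B3 bt hind ha hsol c hc
      have h3 : f3 c.2.2 = 1 := by rw [hPc, h1]
      linarith)

private theorem lb_D0 (bt : IsLatinBitrade star tri) (hind : BitradeIndecomposable star tri)
    (ha : a ∈ star) (hsol : IsEqSolution star a f1 f2 f3)
    (y : S) (h0 : f3 y = 0) :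
    ∀ c ∈ tri, c.2.2 = y → f1 c.1 = 0 ∧ f2 c.2.1 = 0 := by
  have hya : y ≠ a.2.2 := fun h => by rw [h, hsol.2.2.1] at h0; exact one_ne_zero h0
  have hdeg := lb_ind3 bt ha hsol (fun y' => y' = y) (fun h => hya h.symm)
    (Or.inr fun c hc hPc => by
      have hf1 := lb_P1t bt hind ha hsol c hc
      have hf2 := lb_P2t bt hind ha hsol c hc
      have h3 : f3 c.2.2 = 0 := by rw [hPc, h0]
      linarith)
  intro c hc hy
  have hd := hdeg c hc hy
  have hf1 := lb_P1t bt hind ha hsol c hc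
  have hf2 := lb_P2t bt hind ha hsol c hc
  have h3 : f3 c.2.2 = 0 := by rw [hy, h0]
  constructor <;> linarith

private theorem lb_D2' (bt : IsLatinBitrade star tri) (hind : BitradeIndecomposable star tri)
    (ha : a ∈ star) (hsol : IsEqSolution star a f1 f2 f3)
    (x : C) (h1 : f2 x = 1) :
    ∀ c ∈ tri, c.2.1 = x → f1 c.1 = 0 ∧ f3 c.2.2 = 1 := by
  have hxa : x ≠ a.2.1 := fun h => by rw [h, hsol.2.1] at h1; exact one_ne_zero h1.symm
  have hdeg := lb_ind2 bt ha hsol (fun x' => x' = x) (fun h => hxa h.symm)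
    (Or.inr fun c hc hPc => by
      have hf1 := lb_P1t bt hind ha hsol c hc
      have hf3 := lb_P3t bt hind ha hsol c hc
      have h2 : f2 c.2.1 = 1 := by rw [hPc, h1]
      linarith)
  intro c hc hx
  have hd := hdeg c hc hx
  have hf1 := lb_P1t bt hind ha hsol c hc
  have hf3 := lb_P3t bt hind ha hsol c hc
  have h2 : f2 c.2.1 = 1 := by rw [hx, h1]
  constructor <;> linarith

private theorem lb_D1' (bt : IsLatinBitrade star tri) (hind : BitradeIndecomposable star tri)
    (ha : a ∈ star) (hsol : IsEqSolution star a f1 f2 f3)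
    (r : R) (h1 : f1 r = 1) :
    ∀ c ∈ tri, c.1 = r → f2 c.2.1 = 0 ∧ f3 c.2.2 = 1 := by
  have hra : r ≠ a.1 := fun h => by rw [h, hsol.1] at h1; exact one_ne_zero h1.symm
  have hdeg := lb_ind1 bt ha hsol (fun r' => r' = r) (fun h => hra h.symm)
    (Or.inr fun c hc hPc => by
      have hf2 := lb_P2t bt hind ha hsol c hc
      have hf3 := lb_P3t bt hind ha hsol c hc
      have hf : f1 c.1 = 1 := by rw [hPc, h1]
      linarith)
  intro c hc hr
  have hd := hdeg c hc hr
  have hf2 := lb_P2t bt hind ha hsol c hc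
  have hf3 := lb_P3t bt hind ha hsol c hc
  have hf : f1 c.1 = 1 := by rw [hr, h1]
  constructor <;> linarith

end LBHelpers6

section LBHelpers7

variable {star tri : Finset (R × C × S)} {a : R × C × S}
variable {f1 : R → ℚ} {f2 : C → ℚ} {f3 : S → ℚ}

/-- No star triple other than `a` sits at the corner `(0,0)`. -/
private theorem lb_Ra (bt : IsLatinBitrade star tri) (hind : BitradeIndecomposable star tri)
    (ha : a ∈ star) (hsol : IsEqSolution star a f1 f2 f3)
    {b : R × C × S} (hb : b ∈ star) (hba : b ≠ a)
    (hb1 : f1 b.1 = 0) (hb2 : f2 b.2.1 = 0) : False := by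
  have hb3 : f3 b.2.2 = 0 := by
    have := hsol.2.2.2 b hb hba; linarith
  set X₁ := star.filter (fun p => f3 p.2.2 = 0) with hX₁
  set X₂ := tri.filter (fun q => f3 q.2.2 = 0) with hX₂
  have hstar0 : ∀ p ∈ star, f3 p.2.2 = 0 → p ≠ a ∧ f1 p.1 = 0 ∧ f2 p.2.1 = 0 := by
    intro p hp hp3
    have hpa : p ≠ a := fun h => by rw [h, hsol.2.2.1] at hp3; exact one_ne_zero hp3
    have heq := hsol.2.2.2 p hp hpa
    have h1 := lb_P1 bt hind ha hsol p hp
    have h2 := lb_P2 bt hind ha hsol p hp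
    exact ⟨hpa, by linarith, by linarith⟩
  have htri0 : ∀ q ∈ tri, f3 q.2.2 = 0 → f1 q.1 = 0 ∧ f2 q.2.1 = 0 :=
    fun q hq hq3 => lb_D0 bt hind ha hsol q.2.2 hq3 q hq rfl
  have hcard : X₂.card = X₁.card :=
    lb_pair_card (fun t => t.2.1) (fun t => t.2.2) bt.r2c bt.r3c _
      (fun x y _ h2 => by have e2 : x.2.2 = y.2.2 := h2; rw [e2])
  have hmap : ∀ p ∈ X₁, ∀ q ∈ tri, q.1 = p.1 → q.2.1 = p.2.1 → q ∈ X₂ := by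
    intro p hp q hq e1 e2
    obtain ⟨hps, hp3⟩ := Finset.mem_filter.1 hp
    obtain ⟨hpa, hp1, hp2⟩ := hstar0 p hps hp3
    have hq1 : f1 q.1 = 0 := by rw [e1]; exact hp1
    have hq2 : f2 q.2.1 = 0 := by rw [e2]; exact hp2
    by_cases hqa1 : q.1 = a.1
    · have hqa2 : q.2.1 ≠ a.2.1 := by
        intro h
        exact hpa (lb_star_eq12 bt hps ha (by rw [← e1, hqa1]) (by rw [← e2, h]))
      have hd := lb_D2 bt hind ha hsol q.2.1 hq2 hqa2 q hq rfl
      exact Finset.mem_filter.2 ⟨hq, by linarith⟩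
    · have hd := lb_D1 bt hind ha hsol q.1 hq1 hqa1 q hq rfl
      exact Finset.mem_filter.2 ⟨hq, by linarith⟩
  refine lb_closed bt hind X₁ X₂ (Finset.filter_subset _ _) (Finset.filter_subset _ _)
    ⟨b, Finset.mem_filter.2 ⟨hb, hb3⟩⟩ a ha
    (fun h => one_ne_zero (hsol.2.2.1 ▸ (Finset.mem_filter.1 h).2)) ?_ ?_
  · intro p hp q hq hsh
    obtain ⟨hps, hp3⟩ := Finset.mem_filter.1 hp
    rcases hsh with ⟨e1, e2⟩ | ⟨_, e2⟩ | ⟨_, e2⟩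
    · exact hmap p hp q hq e1 e2
    · exact Finset.mem_filter.2 ⟨hq, by rw [e2]; exact hp3⟩
    · exact Finset.mem_filter.2 ⟨hq, by rw [e2]; exact hp3⟩
  · intro q hq p hps hsh
    obtain ⟨hqt, hq3⟩ := Finset.mem_filter.1 hq
    obtain ⟨hq1, hq2⟩ := htri0 q hqt hq3
    rcases hsh with ⟨e1, e2⟩ | ⟨_, e2⟩ | ⟨_, e2⟩
    · by_cases hpa : p = a
      · exact (lb_pigeon (fun t => t.1) (fun t => t.2.1) bt.r2a bt.r3a X₁ X₂
          (Finset.filter_subset _ _) (Finset.filter_subset _ _) hcard.le a ha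
          (fun h => one_ne_zero (hsol.2.2.1 ▸ (Finset.mem_filter.1 h).2)) hmap
          q hq (show q.1 = a.1 by rw [← e1, hpa]) (show q.2.1 = a.2.1 by rw [← e2, hpa])).elim
      · have hp1 : f1 p.1 = 0 := by rw [e1]; exact hq1
        have hp2 : f2 p.2.1 = 0 := by rw [e2]; exact hq2
        have heq := hsol.2.2.2 p hps hpa
        exact Finset.mem_filter.2 ⟨hps, by linarith⟩
    · exact Finset.mem_filter.2 ⟨hps, by rw [e2]; exact hq3⟩
    · exact Finset.mem_filter.2 ⟨hps, by rw [e2]; exact hq3⟩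

/-- No star triple sits at the corner `(1,0)` (column value 1). -/
private theorem lb_Rb (bt : IsLatinBitrade star tri) (hind : BitradeIndecomposable star tri)
    (ha : a ∈ star) (hsol : IsEqSolution star a f1 f2 f3)
    {b : R × C × S} (hb : b ∈ star) (hb2 : f2 b.2.1 = 1) : False := by
  set X₁ := star.filter (fun p => f2 p.2.1 = 1) with hX₁
  set X₂ := tri.filter (fun q => f2 q.2.1 = 1) with hX₂
  have hstar1 : ∀ p ∈ star, f2 p.2.1 = 1 → p ≠ a ∧ f1 p.1 = 0 ∧ f3 p.2.2 = 1 := by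
    intro p hp hp2
    have hpa : p ≠ a := fun h => by rw [h, hsol.2.1] at hp2; exact one_ne_zero hp2.symm
    have heq := hsol.2.2.2 p hp hpa
    have h1 := lb_P1 bt hind ha hsol p hp
    have h3 := lb_P3 bt hind ha hsol p hp
    exact ⟨hpa, by linarith, by linarith⟩
  have htri1 : ∀ q ∈ tri, f2 q.2.1 = 1 → f1 q.1 = 0 ∧ f3 q.2.2 = 1 :=
    fun q hq hq2 => lb_D2' bt hind ha hsol q.2.1 hq2 q hq rfl
  have hcard : X₂.card = X₁.card :=
    lb_pair_card (fun t => t.1) (fun t => t.2.1) bt.r2a bt.r3a _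
      (fun x y _ h2 => by have e2 : x.2.1 = y.2.1 := h2; rw [e2])
  have hmap : ∀ p ∈ X₁, ∀ q ∈ tri, q.1 = p.1 → q.2.2 = p.2.2 → q ∈ X₂ := by
    intro p hp q hq e1 e2
    obtain ⟨hps, hp2⟩ := Finset.mem_filter.1 hp
    obtain ⟨hpa, hp1, hp3⟩ := hstar1 p hps hp2
    have hq1 : f1 q.1 = 0 := by rw [e1]; exact hp1
    have hq3 : f3 q.2.2 = 1 := by rw [e2]; exact hp3
    by_cases hqa1 : q.1 = a.1
    · have hqa3 : q.2.2 ≠ a.2.2 := by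
        intro h
        exact hpa (lb_star_eq13 bt hps ha (by rw [← e1, hqa1]) (by rw [← e2, h]))
      have hd := lb_D3 bt hind ha hsol q.2.2 hq3 hqa3 q hq rfl
      exact Finset.mem_filter.2 ⟨hq, by linarith⟩
    · have hd := lb_D1 bt hind ha hsol q.1 hq1 hqa1 q hq rfl
      exact Finset.mem_filter.2 ⟨hq, by linarith⟩
  refine lb_closed bt hind X₁ X₂ (Finset.filter_subset _ _) (Finset.filter_subset _ _)
    ⟨b, Finset.mem_filter.2 ⟨hb, hb2⟩⟩ a ha
    (fun h => one_ne_zero ((hsol.2.1 ▸ (Finset.mem_filter.1 h).2).symm)) ?_ ?_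
  · intro p hp q hq hsh
    obtain ⟨hps, hp2⟩ := Finset.mem_filter.1 hp
    rcases hsh with ⟨_, e2⟩ | ⟨e1, e2⟩ | ⟨e1, _⟩
    · exact Finset.mem_filter.2 ⟨hq, by rw [e2]; exact hp2⟩
    · exact hmap p hp q hq e1 e2
    · exact Finset.mem_filter.2 ⟨hq, by rw [e1]; exact hp2⟩
  · intro q hq p hps hsh
    obtain ⟨hqt, hq2⟩ := Finset.mem_filter.1 hq
    obtain ⟨hq1, hq3⟩ := htri1 q hqt hq2
    rcases hsh with ⟨_, e2⟩ | ⟨e1, e2⟩ | ⟨e1, _⟩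
    · exact Finset.mem_filter.2 ⟨hps, by rw [e2]; exact hq2⟩
    · by_cases hpa : p = a
      · exact (lb_pigeon (fun t => t.1) (fun t => t.2.2) bt.r2b bt.r3b X₁ X₂
          (Finset.filter_subset _ _) (Finset.filter_subset _ _) hcard.le a ha
          (fun h => one_ne_zero ((hsol.2.1 ▸ (Finset.mem_filter.1 h).2).symm)) hmap
          q hq (show q.1 = a.1 by rw [← e1, hpa]) (show q.2.2 = a.2.2 by rw [← e2, hpa])).elim
      · have hp1 : f1 p.1 = 0 := by rw [e1]; exact hq1
        have hp3 : f3 p.2.2 = 1 := by rw [e2]; exact hq3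
        have heq := hsol.2.2.2 p hps hpa
        exact Finset.mem_filter.2 ⟨hps, by linarith⟩
    · exact Finset.mem_filter.2 ⟨hps, by rw [e1]; exact hq2⟩

/-- No star triple sits at the corner `(0,1)` (row value 1). -/
private theorem lb_Rc (bt : IsLatinBitrade star tri) (hind : BitradeIndecomposable star tri)
    (ha : a ∈ star) (hsol : IsEqSolution star a f1 f2 f3)
    {b : R × C × S} (hb : b ∈ star) (hb1 : f1 b.1 = 1) : False := by
  set X₁ := star.filter (fun p => f1 p.1 = 1) with hX₁
  set X₂ := tri.filter (fun q => f1 q.1 = 1) with hX₂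
  have hstar1 : ∀ p ∈ star, f1 p.1 = 1 → p ≠ a ∧ f2 p.2.1 = 0 ∧ f3 p.2.2 = 1 := by
    intro p hp hp1
    have hpa : p ≠ a := fun h => by rw [h, hsol.1] at hp1; exact one_ne_zero hp1.symm
    have heq := hsol.2.2.2 p hp hpa
    have h2 := lb_P2 bt hind ha hsol p hp
    have h3 := lb_P3 bt hind ha hsol p hp
    exact ⟨hpa, by linarith, by linarith⟩
  have htri1 : ∀ q ∈ tri, f1 q.1 = 1 → f2 q.2.1 = 0 ∧ f3 q.2.2 = 1 :=
    fun q hq hq1 => lb_D1' bt hind ha hsol q.1 hq1 q hq rfl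
  have hcard : X₂.card = X₁.card :=
    lb_pair_card (fun t => t.1) (fun t => t.2.1) bt.r2a bt.r3a _
      (fun x y h1 _ => by have e1 : x.1 = y.1 := h1; rw [e1])
  have hmap : ∀ p ∈ X₁, ∀ q ∈ tri, q.2.1 = p.2.1 → q.2.2 = p.2.2 → q ∈ X₂ := by
    intro p hp q hq e1 e2
    obtain ⟨hps, hp1⟩ := Finset.mem_filter.1 hp
    obtain ⟨hpa, hp2, hp3⟩ := hstar1 p hps hp1
    have hq2 : f2 q.2.1 = 0 := by rw [e1]; exact hp2
    have hq3 : f3 q.2.2 = 1 := by rw [e2]; exact hp3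
    by_cases hqa2 : q.2.1 = a.2.1
    · have hqa3 : q.2.2 ≠ a.2.2 := by
        intro h
        exact hpa (lb_star_eq23 bt hps ha (by rw [← e1, hqa2]) (by rw [← e2, h]))
      have hd := lb_D3 bt hind ha hsol q.2.2 hq3 hqa3 q hq rfl
      exact Finset.mem_filter.2 ⟨hq, by linarith⟩
    · have hd := lb_D2 bt hind ha hsol q.2.1 hq2 hqa2 q hq rfl
      exact Finset.mem_filter.2 ⟨hq, by linarith⟩
  refine lb_closed bt hind X₁ X₂ (Finset.filter_subset _ _) (Finset.filter_subset _ _)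
    ⟨b, Finset.mem_filter.2 ⟨hb, hb1⟩⟩ a ha
    (fun h => one_ne_zero ((hsol.1 ▸ (Finset.mem_filter.1 h).2).symm)) ?_ ?_
  · intro p hp q hq hsh
    obtain ⟨hps, hp1⟩ := Finset.mem_filter.1 hp
    rcases hsh with ⟨e1, _⟩ | ⟨e1, _⟩ | ⟨e1, e2⟩
    · exact Finset.mem_filter.2 ⟨hq, by rw [e1]; exact hp1⟩
    · exact Finset.mem_filter.2 ⟨hq, by rw [e1]; exact hp1⟩
    · exact hmap p hp q hq e1 e2
  · intro q hq p hps hsh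
    obtain ⟨hqt, hq1⟩ := Finset.mem_filter.1 hq
    obtain ⟨hq2, hq3⟩ := htri1 q hqt hq1
    rcases hsh with ⟨e1, _⟩ | ⟨e1, _⟩ | ⟨e1, e2⟩
    · exact Finset.mem_filter.2 ⟨hps, by rw [e1]; exact hq1⟩
    · exact Finset.mem_filter.2 ⟨hps, by rw [e1]; exact hq1⟩
    · by_cases hpa : p = a
      · exact (lb_pigeon (fun t => t.2.1) (fun t => t.2.2) bt.r2c bt.r3c X₁ X₂
          (Finset.filter_subset _ _) (Finset.filter_subset _ _) hcard.le a ha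
          (fun h => one_ne_zero ((hsol.1 ▸ (Finset.mem_filter.1 h).2).symm)) hmap
          q hq (show q.2.1 = a.2.1 by rw [← e1, hpa]) (show q.2.2 = a.2.2 by rw [← e2, hpa])).elim
      · have hp2 : f2 p.2.1 = 0 := by rw [e1]; exact hq2
        have hp3 : f3 p.2.2 = 1 := by rw [e2]; exact hq3
        have heq := hsol.2.2.2 p hps hpa
        exact Finset.mem_filter.2 ⟨hps, by linarith⟩
  
end LBHelpers7

/-- **Lemma 2.4.** If `b ∈ T*` and `i` are such that `b_i ≠ a_i` but `b̄_i = ā_i`, then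
`Δ(c,a)` degenerates for every `c ∈ T△` with `c_i = b_i`, and `b̄` is not a vertex of `Σ`. -/
theorem stmt3 (star tri : Finset (R × C × S)) (hsph : IsSphericalBitrade star tri)
    (a : R × C × S) (ha : a ∈ star)
    (f1 : R → ℚ) (f2 : C → ℚ) (f3 : S → ℚ)
    (hsol : IsEqSolution star a f1 f2 f3)
    (b : R × C × S) (hb : b ∈ star) (i : Fin 3)
    (hne : ¬ coordEq b a i)
    (hval : coordVal f1 f2 f3 b i = coordVal f1 f2 f3 a i) :
    (∀ c ∈ tri, coordEq c b i → DeltaDegenerate (f1 c.1) (f2 c.2.1) (f3 c.2.2)) ∧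
    (((f2 b.2.1 : ℝ), (f1 b.1 : ℝ)) : ℝ × ℝ) ∉
      ({((0 : ℝ), (0 : ℝ)), ((1 : ℝ), (0 : ℝ)), ((0 : ℝ), (1 : ℝ))} : Set (ℝ × ℝ)) := by
  obtain ⟨bt, hind, -⟩ := hsph
  have hba : b ≠ a := by
    intro h
    apply hne
    subst h
    fin_cases i <;> simp [coordEq]
  have part2core :
      ¬ ((f2 b.2.1 = 0 ∧ f1 b.1 = 0) ∨ (f2 b.2.1 = 1 ∧ f1 b.1 = 0) ∨
         (f2 b.2.1 = 0 ∧ f1 b.1 = 1)) → (((f2 b.2.1 : ℝ), (f1 b.1 : ℝ)) : ℝ × ℝ) ∉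
      ({((0 : ℝ), (0 : ℝ)), ((1 : ℝ), (0 : ℝ)), ((0 : ℝ), (1 : ℝ))} : Set (ℝ × ℝ)) := by
    intro hnot hmem
    apply hnot
    simp only [Set.mem_insert_iff, Set.mem_singleton_iff, Prod.mk.injEq] at hmem
    rcases hmem with ⟨h1, h2⟩ | ⟨h1, h2⟩ | ⟨h1, h2⟩
    · exact Or.inl ⟨by exact_mod_cast h1, by exact_mod_cast h2⟩
    · exact Or.inr (Or.inl ⟨by exact_mod_cast h1, by exact_mod_cast h2⟩)
    · exact Or.inr (Or.inr ⟨by exact_mod_cast h1, by exact_mod_cast h2⟩)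
  fin_cases i
  · -- i = 0 : rows
    simp only [coordVal, coordEq, Fin.zero_eta, Matrix.cons_val_zero] at hval hne
    rw [hsol.1] at hval
    constructor
    · intro c hc hceq
      simp only [coordEq, Fin.zero_eta, Matrix.cons_val_zero] at hceq
      have hd := lb_D1 bt hind ha hsol b.1 hval hne c hc hceq
      show f1 c.1 + f2 c.2.1 = f3 c.2.2
      linarith
    · apply part2core
      rintro (⟨h1, h2⟩ | ⟨h1, h2⟩ | ⟨h1, h2⟩)
      · exact lb_Ra bt hind ha hsol hb hba h2 h1
      · exact lb_Rb bt hind ha hsol hb h1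
      · rw [hval] at h2; exact zero_ne_one h2
  · -- i = 1 : columns
    simp only [coordVal, coordEq, Fin.mk_one, Matrix.cons_val_one, Matrix.head_cons,
      Matrix.cons_val_zero] at hval hne
    rw [hsol.2.1] at hval
    constructor
    · intro c hc hceq
      simp only [coordEq, Fin.mk_one, Matrix.cons_val_one, Matrix.head_cons] at hceq
      have hd := lb_D2 bt hind ha hsol b.2.1 hval hne c hc hceq
      show f1 c.1 + f2 c.2.1 = f3 c.2.2
      linarith
    · apply part2core
      rintro (⟨h1, h2⟩ | ⟨h1, h2⟩ | ⟨h1, h2⟩)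
      · exact lb_Ra bt hind ha hsol hb hba h2 h1
      · rw [hval] at h1; exact zero_ne_one h1
      · exact lb_Rc bt hind ha hsol hb h2
  · -- i = 2 : symbols
    simp only [coordVal, coordEq, Fin.reduceFinMk, Matrix.cons_val_two, Matrix.tail_cons,
      Matrix.head_cons] at hval hne
    rw [hsol.2.2.1] at hval
    have heqb := hsol.2.2.2 b hb hba
    constructor
    · intro c hc hceq
      simp only [coordEq, Fin.reduceFinMk, Matrix.cons_val_two, Matrix.tail_cons,
        Matrix.head_cons] at hceq
      have hd := lb_D3 bt hind ha hsol b.2.2 hval hne c hc hceq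
      show f1 c.1 + f2 c.2.1 = f3 c.2.2
      linarith
    · apply part2core
      rintro (⟨h1, h2⟩ | ⟨h1, h2⟩ | ⟨h1, h2⟩)
      · rw [hval] at heqb; rw [h1, h2] at heqb; norm_num at heqb
      · exact lb_Rb bt hind ha hsol hb h1
      · exact lb_Rc bt hind ha hsol hb h2
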